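/- (LLN for a polynomial with two roots.) Fix d ≥ 1 and let p(x) := x^d (x−1)^d, a monic polynomial of degree 2d whose root multiset Λ consists of d copies of 1 and d copies of 0. Then ẽ_j(Λ) = binom(d,j)/binom(2d,j) for 0 ≤ j ≤ d and ẽ_j(Λ) = 0 for d+1 ≤ j ≤ 2d; moreover, if λ_1^(n) ≥ ... ≥ λ_{2d}^(n) denote the nonnegative real roots of p^{⊠_{2d} n}, then lim_{n→∞} (λ_i^(n))^{1/n} = (d−i+1)/(2d−i+1) for 1 ≤ i ≤ d, and λ_i^(n) = 0 for d+1 ≤ i ≤ 2d. -/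

import Mathlib

open Polynomial Filter

/-- Finite free multiplicative convolution of two polynomials of degree `d`:
for `p(x) = Σ (-1)^i p_i x^{d-i}` and `q(x) = Σ (-1)^i q_i x^{d-i}`,
`(p ⊠_d q)(x) = Σ (-1)^i (p_i q_i / binom(d,i)) x^{d-i}`. -/
noncomputable def ffmul (d : ℕ) (p q : Polynomial ℝ) : Polynomial ℝ :=
  ∑ i ∈ Finset.range (d + 1),
    Polynomial.C ((-1 : ℝ) ^ i * p.coeff (d - i) * q.coeff (d - i) / (d.choose i : ℝ)) *
      Polynomial.X ^ (d - i)

/-- `ffmulPow d p n` is the `n`-th finite free multiplicative convolution power `p^{⊠_d n}`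
(for `n ≥ 1`); the convolution identity `(x-1)^d` is used as the 0-th power. -/
noncomputable def ffmulPow (d : ℕ) (p : Polynomial ℝ) : ℕ → Polynomial ℝ
  | 0 => (Polynomial.X - 1) ^ d
  | n + 1 => ffmul d p (ffmulPow d p n)

/-- Normalized elementary symmetric function `ẽ_i(Λ) = e_i(Λ) / binom(d,i)`. -/
noncomputable def etilde (d i : ℕ) (Λ : Multiset ℝ) : ℝ :=
  Λ.esymm i / (d.choose i : ℝ)

-- coefficient of (X-1)^m
lemma coeff_sub_one_pow (m i : ℕ) (h : i ≤ m) :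
    (((X : ℝ[X]) - 1) ^ m).coeff (m - i) = (-1 : ℝ) ^ i * (m.choose i : ℝ) := by
  have h1 : ((X : ℝ[X]) - 1) = X + C (-1 : ℝ) := by simp [sub_eq_add_neg]
  rw [h1, coeff_X_add_C_pow]
  have h2 : m - (m - i) = i := by omega
  rw [h2, Nat.choose_symm h]

-- coefficient of p = X^d (X-1)^d
lemma coeff_p (d i : ℕ) (h : i ≤ 2 * d) :
    (((X : ℝ[X]) ^ d * (X - 1) ^ d)).coeff (2 * d - i) = (-1 : ℝ) ^ i * (d.choose i : ℝ) := by
  rw [mul_comm, coeff_mul_X_pow']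
  by_cases hid : i ≤ d
  · rw [if_pos (by omega)]
    have : 2 * d - i - d = d - i := by omega
    rw [this, coeff_sub_one_pow d i hid]
  · rw [if_neg (by omega), Nat.choose_eq_zero_of_lt (by omega)]
    simp

lemma ffmul_coeff (D : ℕ) (p q : ℝ[X]) (j : ℕ) (hj : j ≤ D) :
    (ffmul D p q).coeff (D - j)
      = (-1 : ℝ) ^ j * p.coeff (D - j) * q.coeff (D - j) / (D.choose j : ℝ) := by
  rw [ffmul, finset_sum_coeff]
  rw [Finset.sum_eq_single j]
  · simp [coeff_C_mul, coeff_X_pow]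
  · intro i hi hne
    rw [Finset.mem_range] at hi
    have : D - j ≠ D - i := by omega
    simp [coeff_C_mul, coeff_X_pow, this]
  · intro h
    exact absurd (Finset.mem_range.mpr (by omega)) h

/-- The coefficient values for `ffmulPow (2d) p n`. -/
noncomputable def Eval (d n i : ℕ) : ℝ :=
  ((d.choose i : ℝ)) ^ n / (((2 * d).choose i : ℝ)) ^ (n - 1)

lemma ffmulPow_coeff (d : ℕ) (hd : 1 ≤ d) :
    ∀ n, 1 ≤ n → ∀ i ≤ 2 * d,
      (ffmulPow (2 * d) ((X : ℝ[X]) ^ d * (X - 1) ^ d) n).coeff (2 * d - i)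
        = (-1 : ℝ) ^ i * Eval d n i := by
  intro n
  induction n with
  | zero => omega
  | succ m ih =>
    intro _ i hi
    have hy : (0 : ℝ) < ((2 * d).choose i : ℝ) := by
      exact_mod_cast Nat.cast_pos.mpr (Nat.choose_pos hi)
    have hcoeff : (ffmulPow (2 * d) ((X : ℝ[X]) ^ d * (X - 1) ^ d) (m + 1)).coeff (2 * d - i)
        = (-1 : ℝ) ^ i * (((X : ℝ[X]) ^ d * (X - 1) ^ d)).coeff (2 * d - i)
          * (ffmulPow (2 * d) ((X : ℝ[X]) ^ d * (X - 1) ^ d) m).coeff (2 * d - i)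
          / ((2 * d).choose i : ℝ) := by
      rw [show ffmulPow (2 * d) ((X : ℝ[X]) ^ d * (X - 1) ^ d) (m + 1)
            = ffmul (2 * d) ((X : ℝ[X]) ^ d * (X - 1) ^ d)
               (ffmulPow (2 * d) ((X : ℝ[X]) ^ d * (X - 1) ^ d) m) from rfl,
          ffmul_coeff _ _ _ i hi]
    rcases Nat.eq_zero_or_pos m with hm | hm
    · subst hm
      rw [hcoeff]
      show _ = _
      rw [show ffmulPow (2 * d) ((X : ℝ[X]) ^ d * (X - 1) ^ d) 0 = ((X : ℝ[X]) - 1) ^ (2 * d) from rfl]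
      rw [coeff_p d i hi, coeff_sub_one_pow (2 * d) i hi, Eval]
      field_simp
      ring_nf
      have hneg : ((-1 : ℝ)) ^ (i * 3) = (-1 : ℝ) ^ i := by
        rcases Nat.even_or_odd i with h | h
        · simp [pow_mul, h.neg_one_pow]
        · simp [pow_mul, h.neg_one_pow, pow_succ]
      rw [mul_comm i 2, pow_mul, neg_one_sq, one_pow, mul_one]
    · rw [hcoeff, coeff_p d i hi, ih hm i hi, Eval, Eval]
      have hsub : m + 1 - 1 = m := rfl
      have hsub2 : m - 1 + 1 = m := by omega
      rw [hsub]
      rw [show ((d.choose i : ℝ)) ^ (m + 1) = (d.choose i : ℝ) * (d.choose i : ℝ) ^ m by ring]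
      rw [show ((((2 * d).choose i : ℝ))) ^ m = ((2 * d).choose i : ℝ) ^ (m - 1) * ((2 * d).choose i : ℝ) by
        rw [← pow_succ, hsub2]]
      have hneg : ((-1 : ℝ)) ^ (i * 3) = (-1 : ℝ) ^ i := by
        rcases Nat.even_or_odd i with h | h
        · simp [pow_mul, h.neg_one_pow]
        · simp [pow_mul, h.neg_one_pow, pow_succ]
      field_simp
      ring_nf
      rw [mul_comm i 2, pow_mul, neg_one_sq, one_pow, mul_one]

/-- esymm of the root multiset equals the (signed) coefficient. -/
lemma esymm_of_prod (f : ℕ → ℝ) (N : ℕ) (j : ℕ) (hj : j ≤ N) :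
    (∏ i ∈ Finset.Icc 1 N, ((X : ℝ[X]) - C (f i))).coeff (N - j)
      = (-1 : ℝ) ^ j * ((Finset.Icc 1 N).val.map f).esymm j := by
  have hcard : Multiset.card ((Finset.Icc 1 N).val.map f) = N := by
    rw [Multiset.card_map]
    simp [Nat.card_Icc]
  have hprod : (∏ i ∈ Finset.Icc 1 N, ((X : ℝ[X]) - C (f i)))
      = (((Finset.Icc 1 N).val.map f).map (fun t => (X : ℝ[X]) - C t)).prod := by
    rw [Multiset.map_map]
    rfl
  rw [hprod]
  have := Multiset.prod_X_sub_C_coeff ((Finset.Icc 1 N).val.map f)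
    (k := N - j) (by rw [hcard]; omega)
  rw [this, hcard]
  congr 1 <;> rw [show N - (N - j) = j by omega]

/-- Any subset product is at most the product of the top elements. -/
lemma subset_prod_le (f : ℕ → ℝ) (N : ℕ)
    (hmono : ∀ a b, 1 ≤ a → a ≤ b → b ≤ N → f b ≤ f a)
    (hnn : ∀ a, 1 ≤ a → a ≤ N → 0 ≤ f a) :
    ∀ (m : ℕ) (s : Finset ℕ), s.card = m → s ⊆ Finset.Icc 1 N →
      ∏ j ∈ s, f j ≤ ∏ k ∈ Finset.Icc 1 m, f k := by
  intro m
  induction m with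
  | zero =>
    intro s hs _
    rw [Finset.card_eq_zero.mp hs]
    simp
  | succ m ih =>
    intro s hcard hsub
    have hne : s.Nonempty := Finset.card_pos.mp (by omega)
    set M := s.max' hne with hMdef
    have hM : M ∈ s := s.max'_mem hne
    have hM1 : 1 ≤ M ∧ M ≤ N := by
      have := hsub hM; rw [Finset.mem_Icc] at this; exact this
    have hsubM : s ⊆ Finset.Icc 1 M := by
      intro j hj
      rw [Finset.mem_Icc]
      exact ⟨(Finset.mem_Icc.mp (hsub hj)).1, Finset.le_max' s j hj⟩
    have hcardM : m + 1 ≤ M := by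
      have := Finset.card_le_card hsubM
      rw [hcard] at this
      rw [Nat.card_Icc] at this
      omega
    have herase : (s.erase M).card = m := by rw [Finset.card_erase_of_mem hM, hcard]; omega
    have hsub' : s.erase M ⊆ Finset.Icc 1 N := (Finset.erase_subset _ _).trans hsub
    have h1 : ∏ j ∈ s, f j = f M * ∏ j ∈ s.erase M, f j := (Finset.mul_prod_erase s f hM).symm
    have h2 : ∏ k ∈ Finset.Icc 1 (m + 1), f k = f (m + 1) * ∏ k ∈ Finset.Icc 1 m, f k := by
      rw [Finset.prod_Icc_succ_top (by omega)]
      ring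
    rw [h1, h2]
    have hprodnn : 0 ≤ ∏ j ∈ s.erase M, f j := by
      apply Finset.prod_nonneg
      intro j hj
      have := Finset.mem_Icc.mp (hsub' hj)
      exact hnn j this.1 this.2
    exact mul_le_mul (hmono (m + 1) M (by omega) hcardM hM1.2)
      (ih (s.erase M) herase hsub') hprodnn (hnn (m + 1) (by omega) (by omega))

lemma esymm_lower (f : ℕ → ℝ) (N i : ℕ)
    (hnn : ∀ a, 1 ≤ a → a ≤ N → 0 ≤ f a) (hi : i ≤ N) :
    ∏ k ∈ Finset.Icc 1 i, f k ≤ ((Finset.Icc 1 N).val.map f).esymm i := by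
  rw [Finset.esymm_map_val]
  apply Finset.single_le_sum (f := fun t => ∏ j ∈ t, f j)
  · intro t ht
    rw [Finset.mem_powersetCard] at ht
    apply Finset.prod_nonneg
    intro j hj
    have := Finset.mem_Icc.mp (ht.1 hj)
    exact hnn j this.1 this.2
  · rw [Finset.mem_powersetCard]
    constructor
    · exact Finset.Icc_subset_Icc_right hi
    · simp [Nat.card_Icc]

lemma esymm_upper (f : ℕ → ℝ) (N i : ℕ)
    (hmono : ∀ a b, 1 ≤ a → a ≤ b → b ≤ N → f b ≤ f a)
    (hnn : ∀ a, 1 ≤ a → a ≤ N → 0 ≤ f a) :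
    ((Finset.Icc 1 N).val.map f).esymm i ≤ (N.choose i : ℝ) * ∏ k ∈ Finset.Icc 1 i, f k := by
  rw [Finset.esymm_map_val]
  have hcard : ((Finset.Icc 1 N).powersetCard i).card = N.choose i := by
    rw [Finset.card_powersetCard, Nat.card_Icc]
    norm_num
  calc ∑ t ∈ (Finset.Icc 1 N).powersetCard i, ∏ j ∈ t, f j
      ≤ ((Finset.Icc 1 N).powersetCard i).card • (∏ k ∈ Finset.Icc 1 i, f k) := by
        apply Finset.sum_le_card_nsmul
        intro t ht
        rw [Finset.mem_powersetCard] at ht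
        exact subset_prod_le f N hmono hnn i t ht.2 ht.1
    _ = (N.choose i : ℝ) * ∏ k ∈ Finset.Icc 1 i, f k := by
        rw [hcard, nsmul_eq_mul]

lemma tendsto_const_rpow_one_div (K : ℝ) (hK : 0 < K) :
    Tendsto (fun n : ℕ => K ^ (1 / (n : ℝ))) atTop (nhds 1) := by
  have heq : (fun n : ℕ => K ^ (1 / (n : ℝ)))
      = fun n : ℕ => Real.exp (Real.log K * (1 / (n : ℝ))) := by
    funext n
    rw [Real.rpow_def_of_pos hK]
  rw [heq]
  have h1 : Tendsto (fun n : ℕ => Real.log K * (1 / (n : ℝ))) atTop (nhds 0) := by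
    have := tendsto_one_div_atTop_nhds_zero_nat.const_mul (Real.log K)
    simpa using this
  have := (Real.continuous_exp.tendsto 0).comp h1
  simpa [Function.comp_def] using this

lemma esymm_Lambda (d : ℕ) (hd : 1 ≤ d) :
    ∀ j ≤ 2 * d, (Multiset.replicate d (1 : ℝ) + Multiset.replicate d (0 : ℝ)).esymm j
      = (d.choose j : ℝ) := by
  intro j hj
  have hcard : Multiset.card (Multiset.replicate d (1:ℝ) + Multiset.replicate d (0:ℝ)) = 2 * d := by
    simp [two_mul]
  have hprod : ((Multiset.replicate d (1:ℝ) + Multiset.replicate d (0:ℝ)).map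
      fun t => (X : ℝ[X]) - C t).prod = (X : ℝ[X]) ^ d * (X - 1) ^ d := by
    rw [Multiset.map_add, Multiset.prod_add, Multiset.map_replicate, Multiset.map_replicate,
      Multiset.prod_replicate, Multiset.prod_replicate]
    simp [mul_comm]
  have h1 := Multiset.prod_X_sub_C_coeff
    (Multiset.replicate d (1:ℝ) + Multiset.replicate d (0:ℝ))
    (k := 2 * d - j) (by rw [hcard]; omega)
  rw [hprod, hcard, show 2 * d - (2 * d - j) = j by omega] at h1
  rw [coeff_p d j hj] at h1
  have hne : ((-1 : ℝ) ^ j) ≠ 0 := by apply pow_ne_zero; norm_num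
  exact (mul_left_cancel₀ hne h1).symm

lemma esymm_roots (d : ℕ) (hd : 1 ≤ d) (lam : ℕ → ℕ → ℝ)
    (hlam : ∀ n, 1 ≤ n → ffmulPow (2 * d) ((X : ℝ[X]) ^ d * (X - 1) ^ d) n
      = ∏ i ∈ Finset.Icc 1 (2 * d), (X - C (lam n i)))
    (n : ℕ) (hn : 1 ≤ n) (j : ℕ) (hj : j ≤ 2 * d) :
    ((Finset.Icc 1 (2 * d)).val.map (lam n)).esymm j = Eval d n j := by
  have h1 := esymm_of_prod (lam n) (2 * d) j hj
  rw [← hlam n hn, ffmulPow_coeff d hd n hn j hj] at h1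
  have hne : ((-1 : ℝ) ^ j) ≠ 0 := by apply pow_ne_zero; norm_num
  exact (mul_left_cancel₀ hne h1).symm

lemma lam_eq_zero (d : ℕ) (hd : 1 ≤ d) (lam : ℕ → ℕ → ℝ)
    (hlam : ∀ n, 1 ≤ n → ffmulPow (2 * d) ((X : ℝ[X]) ^ d * (X - 1) ^ d) n
      = ∏ i ∈ Finset.Icc 1 (2 * d), (X - C (lam n i)))
    (hmono : ∀ n, 1 ≤ n → ∀ a b, 1 ≤ a → a ≤ b → b ≤ 2 * d → lam n b ≤ lam n a)
    (hnneg : ∀ n, 1 ≤ n → ∀ a, 1 ≤ a → a ≤ 2 * d → 0 ≤ lam n a)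
    (n : ℕ) (hn : 1 ≤ n) : ∀ i, d + 1 ≤ i → i ≤ 2 * d → lam n i = 0 := by
  have hd1 : lam n (d + 1) = 0 := by
    have he := esymm_roots d hd lam hlam n hn (d + 1) (by omega)
    have hE0 : Eval d n (d + 1) = 0 := by
      rw [Eval, Nat.choose_eq_zero_of_lt (by omega)]
      simp [zero_pow (by omega : n ≠ 0)]
    have hlow := esymm_lower (lam n) (2 * d) (d + 1) (hnneg n hn) (by omega)
    rw [he, hE0] at hlow
    have hpowle : (lam n (d + 1)) ^ (d + 1) ≤ ∏ k ∈ Finset.Icc 1 (d + 1), lam n k := by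
      have := Finset.prod_le_prod (s := Finset.Icc 1 (d + 1))
        (f := fun _ => lam n (d + 1)) (g := fun k => lam n k)
        (fun k hk => hnneg n hn (d + 1) (by omega) (by omega))
        (fun k hk => by
          rw [Finset.mem_Icc] at hk
          exact hmono n hn k (d + 1) hk.1 hk.2 (by omega))
      rwa [Finset.prod_const, Nat.card_Icc, show d + 1 + 1 - 1 = d + 1 by omega] at this
    have h0 : (lam n (d + 1)) ^ (d + 1) = 0 := by
      have hge : 0 ≤ (lam n (d + 1)) ^ (d + 1) :=
        pow_nonneg (hnneg n hn (d + 1) (by omega) (by omega)) _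
      linarith
    exact pow_eq_zero_iff (by omega) |>.mp h0
  intro i hi1 hi2
  have h1 := hmono n hn (d + 1) i (by omega) hi1 hi2
  have h2 := hnneg n hn i (by omega) hi2
  linarith [hd1 ▸ h1]

lemma lam_pos (d : ℕ) (hd : 1 ≤ d) (lam : ℕ → ℕ → ℝ)
    (hlam : ∀ n, 1 ≤ n → ffmulPow (2 * d) ((X : ℝ[X]) ^ d * (X - 1) ^ d) n
      = ∏ i ∈ Finset.Icc 1 (2 * d), (X - C (lam n i)))
    (hmono : ∀ n, 1 ≤ n → ∀ a b, 1 ≤ a → a ≤ b → b ≤ 2 * d → lam n b ≤ lam n a)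
    (hnneg : ∀ n, 1 ≤ n → ∀ a, 1 ≤ a → a ≤ 2 * d → 0 ≤ lam n a)
    (n : ℕ) (hn : 1 ≤ n) : ∀ k, 1 ≤ k → k ≤ d → 0 < lam n k := by
  have he := esymm_roots d hd lam hlam n hn d (by omega)
  have hEpos : 0 < Eval d n d := by
    rw [Eval, Nat.choose_self]
    have : (0 : ℝ) < (((2 * d).choose d : ℝ)) ^ (n - 1) :=
      pow_pos (by exact_mod_cast Nat.choose_pos (by omega)) _
    positivity
  have hupp := esymm_upper (lam n) (2 * d) d (hmono n hn) (hnneg n hn)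
  rw [he] at hupp
  have hprodpos : 0 < ∏ k ∈ Finset.Icc 1 d, lam n k := by
    by_contra h
    push_neg at h
    have hnnprod : 0 ≤ ∏ k ∈ Finset.Icc 1 d, lam n k :=
      Finset.prod_nonneg fun k hk => by
        rw [Finset.mem_Icc] at hk
        exact hnneg n hn k hk.1 (by omega)
    have : ∏ k ∈ Finset.Icc 1 d, lam n k = 0 := le_antisymm h hnnprod
    rw [this, mul_zero] at hupp
    linarith
  intro k hk1 hk2
  rcases (hnneg n hn k hk1 (by omega)).lt_or_eq with h | h
  · exact h
  · exfalso
    have : ∏ j ∈ Finset.Icc 1 d, lam n j = 0 :=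
      Finset.prod_eq_zero (Finset.mem_Icc.mpr ⟨hk1, hk2⟩) h.symm
    linarith
lemma Eval_ratio (d i' : ℕ) (hi : i' + 1 ≤ d) (m : ℕ) :
    Eval d (m + 1) (i' + 1)
      = (((d : ℝ) - i') / (2 * (d : ℝ) - i')) ^ (m + 1)
        * ((2 * (d : ℝ) - i') / ((i' : ℝ) + 1)) * Eval d (m + 1) i' := by
  have hi' : i' ≤ d := by omega
  have hi2 : i' ≤ 2 * d := by omega
  set x : ℝ := (d.choose (i' + 1) : ℝ) with hxdef
  set x' : ℝ := (d.choose i' : ℝ) with hx'def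
  set y : ℝ := ((2 * d).choose (i' + 1) : ℝ) with hydef
  set y' : ℝ := ((2 * d).choose i' : ℝ) with hy'def
  have hx'pos : 0 < x' := by rw [hx'def]; exact_mod_cast Nat.choose_pos hi'
  have hy'pos : 0 < y' := by rw [hy'def]; exact_mod_cast Nat.choose_pos hi2
  have hipos : (0 : ℝ) < (i' : ℝ) + 1 := by positivity
  have hdipos : (0 : ℝ) < (d : ℝ) - i' := by
    have : (i' : ℝ) < (d : ℝ) := by exact_mod_cast (by omega : i' < d)
    linarith
  have h2dipos : (0 : ℝ) < 2 * (d : ℝ) - i' := by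
    have : (i' : ℝ) ≤ (d : ℝ) := by exact_mod_cast hi'
    have hd0 : (1 : ℝ) ≤ (d : ℝ) := by exact_mod_cast (by omega : 1 ≤ d)
    linarith
  have hx : x * ((i' : ℝ) + 1) = x' * ((d : ℝ) - i') := by
    have := Nat.choose_succ_right_eq d i'
    have hcast : (x * ((i' : ℝ) + 1) : ℝ) = ((d.choose (i' + 1) * (i' + 1) : ℕ) : ℝ) := by
      push_cast [hxdef]; ring
    rw [hcast, this]
    push_cast [Nat.cast_sub hi']
    ring
  have hy : y * ((i' : ℝ) + 1) = y' * (2 * (d : ℝ) - i') := by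
    have := Nat.choose_succ_right_eq (2 * d) i'
    have hcast : (y * ((i' : ℝ) + 1) : ℝ) = (((2 * d).choose (i' + 1) * (i' + 1) : ℕ) : ℝ) := by
      push_cast [hydef]; ring
    rw [hcast, this]
    push_cast [Nat.cast_sub hi2]
    ring
  set ρ : ℝ := ((d : ℝ) - i') / (2 * (d : ℝ) - i') with hρdef
  set b : ℝ := (2 * (d : ℝ) - i') / ((i' : ℝ) + 1) with hbdef
  have hbpos : 0 < b := by positivity
  have hxeq : x = x' * (ρ * b) := by
    rw [hρdef, hbdef]
    have h2ne : (2 * (d : ℝ) - i') ≠ 0 := h2dipos.ne'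
    field_simp
    rw [mul_div_assoc, div_self (show (0:ℝ) < (d:ℝ) * 2 - i' by linarith).ne', mul_one]
    linarith [hx]
  have hyeq : y = y' * b := by
    rw [hbdef]
    field_simp
    linarith [hy]
  have hE1 : Eval d (m + 1) (i' + 1) = x ^ (m + 1) / y ^ m := by
    rw [Eval, hxdef, hydef]
    norm_num
  have hE2 : Eval d (m + 1) i' = x' ^ (m + 1) / y' ^ m := by
    rw [Eval, hx'def, hy'def]
    norm_num
  rw [hE1, hE2, hxeq, hyeq]
  rw [mul_pow, mul_pow, mul_pow]
  have hy'ne : y' ≠ 0 := ne_of_gt hy'pos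
  have hbne : b ≠ 0 := ne_of_gt hbpos
  field_simp
  ring

lemma lam_bound (d : ℕ) (hd : 1 ≤ d) (lam : ℕ → ℕ → ℝ)
    (hlam : ∀ n, 1 ≤ n → ffmulPow (2 * d) ((X : ℝ[X]) ^ d * (X - 1) ^ d) n
      = ∏ i ∈ Finset.Icc 1 (2 * d), (X - C (lam n i)))
    (hmono : ∀ n, 1 ≤ n → ∀ a b, 1 ≤ a → a ≤ b → b ≤ 2 * d → lam n b ≤ lam n a)
    (hnneg : ∀ n, 1 ≤ n → ∀ a, 1 ≤ a → a ≤ 2 * d → 0 ≤ lam n a)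
    (i' : ℕ) (hi : i' + 1 ≤ d) (n : ℕ) (hn : 1 ≤ n) :
    (((d : ℝ) - i') / (2 * (d : ℝ) - i')) ^ n
        * (((2 * (d : ℝ) - i') / ((i' : ℝ) + 1)) / (((2 * d).choose (i' + 1) : ℝ)))
      ≤ lam n (i' + 1)
    ∧ lam n (i' + 1) ≤ (((d : ℝ) - i') / (2 * (d : ℝ) - i')) ^ n
        * (((2 * (d : ℝ) - i') / ((i' : ℝ) + 1)) * (((2 * d).choose i' : ℝ))) := by
  obtain ⟨m, rfl⟩ : ∃ m, n = m + 1 := ⟨n - 1, by omega⟩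
  set n := m + 1
  set ρ : ℝ := ((d : ℝ) - i') / (2 * (d : ℝ) - i') with hρdef
  set b : ℝ := (2 * (d : ℝ) - i') / ((i' : ℝ) + 1) with hbdef
  set y : ℝ := ((2 * d).choose (i' + 1) : ℝ) with hydef
  set y' : ℝ := ((2 * d).choose i' : ℝ) with hy'def
  have hypos : 0 < y := by
    rw [hydef]; exact_mod_cast Nat.choose_pos (by omega : i' + 1 ≤ 2 * d)
  have hy'pos : 0 < y' := by
    rw [hy'def]; exact_mod_cast Nat.choose_pos (by omega : i' ≤ 2 * d)
  have hdipos : (0 : ℝ) < (d : ℝ) - i' := by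
    have : (i' : ℝ) < (d : ℝ) := by exact_mod_cast (by omega : i' < d)
    linarith
  have h2dipos : (0 : ℝ) < 2 * (d : ℝ) - i' := by
    have : (i' : ℝ) ≤ (d : ℝ) := by exact_mod_cast (by omega : i' ≤ d)
    have hd0 : (1 : ℝ) ≤ (d : ℝ) := by exact_mod_cast hd
    linarith
  have hρpos : 0 < ρ := by rw [hρdef]; positivity
  have hbpos : 0 < b := by rw [hbdef]; positivity
  have hEipos : 0 < Eval d n (i' + 1) := by
    rw [Eval]
    have h1 : (0:ℝ) < (d.choose (i'+1) : ℝ) := by exact_mod_cast Nat.choose_pos hi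
    have h2 : (0:ℝ) < (((2*d).choose (i'+1) : ℝ)) := by
      exact_mod_cast Nat.choose_pos (by omega : i' + 1 ≤ 2 * d)
    positivity
  have hEi'pos : 0 < Eval d n i' := by
    rw [Eval]
    have h1 : (0:ℝ) < (d.choose i' : ℝ) := by exact_mod_cast Nat.choose_pos (by omega : i' ≤ d)
    have h2 : (0:ℝ) < (((2*d).choose i' : ℝ)) := by
      exact_mod_cast Nat.choose_pos (by omega : i' ≤ 2 * d)
    positivity
  -- products
  set Pi : ℝ := ∏ k ∈ Finset.Icc 1 (i' + 1), lam n k with hPidef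
  set Pi' : ℝ := ∏ k ∈ Finset.Icc 1 i', lam n k with hPi'def
  have hfactorpos : ∀ k ∈ Finset.Icc 1 (i' + 1), 0 < lam n k := by
    intro k hk
    rw [Finset.mem_Icc] at hk
    exact lam_pos d hd lam hlam hmono hnneg n (by omega) k hk.1 (by omega)
  have hPipos : 0 < Pi := Finset.prod_pos hfactorpos
  have hPi'pos : 0 < Pi' := Finset.prod_pos fun k hk => hfactorpos k
    (by rw [Finset.mem_Icc] at hk ⊢; omega)
  have hsplit : Pi = Pi' * lam n (i' + 1) := by
    rw [hPidef, hPi'def, Finset.prod_Icc_succ_top (by omega : 1 ≤ i' + 1)]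
  have hlameq : lam n (i' + 1) = Pi / Pi' := by
    rw [eq_div_iff (ne_of_gt hPi'pos), hsplit]; ring
  -- esymm bounds
  have hesI := esymm_roots d hd lam hlam n (by omega) (i' + 1) (by omega)
  have hesI' := esymm_roots d hd lam hlam n (by omega) i' (by omega)
  have hPle : Pi ≤ Eval d n (i' + 1) := by
    rw [← hesI]
    exact esymm_lower (lam n) (2 * d) (i' + 1) (hnneg n (by omega)) (by omega)
  have hP'le : Pi' ≤ Eval d n i' := by
    rw [← hesI']
    exact esymm_lower (lam n) (2 * d) i' (hnneg n (by omega)) (by omega)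
  have hPge : Eval d n (i' + 1) ≤ y * Pi := by
    rw [← hesI, hydef]
    exact esymm_upper (lam n) (2 * d) (i' + 1) (hmono n (by omega)) (hnneg n (by omega))
  have hP'ge : Eval d n i' ≤ y' * Pi' := by
    rw [← hesI', hy'def]
    exact esymm_upper (lam n) (2 * d) i' (hmono n (by omega)) (hnneg n (by omega))
  have hratio := Eval_ratio d i' hi m
  constructor
  · -- lower bound
    have h4 : (Eval d n (i' + 1) / y) / Eval d n i' ≤ Pi / Pi' :=
      div_le_div₀ hPipos.le ((div_le_iff₀ hypos).mpr (by linarith)) hPi'pos (by linarith)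
    have h5 : (Eval d n (i' + 1) / y) / Eval d n i' = ρ ^ n * (b / y) := by
      rw [show Eval d n (i' + 1) = ρ ^ n * b * Eval d n i' from hratio]
      field_simp
    rw [hlameq, ← h5]
    exact h4
  · -- upper bound
    have h2 : Pi / Pi' ≤ Eval d n (i' + 1) / (Eval d n i' / y') :=
      div_le_div₀ hEipos.le hPle (by positivity) ((div_le_iff₀ hy'pos).mpr (by linarith))
    have h3 : Eval d n (i' + 1) / (Eval d n i' / y') = ρ ^ n * (b * y') := by
      rw [show Eval d n (i' + 1) = ρ ^ n * b * Eval d n i' from hratio]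
      field_simp
    rw [hlameq, ← h3]
    exact h2

/-- LLN for `p(x) = x^d (x−1)^d`:
`ẽ_j(Λ) = binom(d,j)/binom(2d,j)` for `j ≤ d`, `ẽ_j(Λ) = 0` for `j > d`,
`(λ_i^(n))^{1/n} → (d−i+1)/(2d−i+1)` for `1 ≤ i ≤ d`, and `λ_i^(n) = 0` for `i > d`. -/
theorem lln_two_roots (d : ℕ) (hd : 1 ≤ d) (p : Polynomial ℝ) (Λ : Multiset ℝ)
    (lam : ℕ → ℕ → ℝ)
    (hp : p = Polynomial.X ^ d * (Polynomial.X - 1) ^ d)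
    (hΛ : Λ = Multiset.replicate d (1 : ℝ) + Multiset.replicate d (0 : ℝ))
    (hlam : ∀ n, 1 ≤ n → ffmulPow (2 * d) p n
        = ∏ i ∈ Finset.Icc 1 (2 * d), (Polynomial.X - Polynomial.C (lam n i)))
    (hmono : ∀ n, 1 ≤ n → ∀ a b, 1 ≤ a → a ≤ b → b ≤ 2 * d → lam n b ≤ lam n a)
    (hnneg : ∀ n, 1 ≤ n → ∀ a, 1 ≤ a → a ≤ 2 * d → 0 ≤ lam n a) :
    (∀ j ≤ d, etilde (2 * d) j Λ = (d.choose j : ℝ) / ((2 * d).choose j : ℝ)) ∧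
    (∀ j, d + 1 ≤ j → j ≤ 2 * d → etilde (2 * d) j Λ = 0) ∧
    (∀ i, 1 ≤ i → i ≤ d →
      Filter.Tendsto (fun n : ℕ => (lam n i) ^ (1 / (n : ℝ))) Filter.atTop
        (nhds (((d : ℝ) - i + 1) / (2 * (d : ℝ) - i + 1)))) ∧
    (∀ i, d + 1 ≤ i → i ≤ 2 * d → ∀ n, 1 ≤ n → lam n i = 0) := by
  subst hp hΛ
  refine ⟨?_, ?_, ?_, ?_⟩
  · intro j hj
    rw [etilde, esymm_Lambda d hd j (by omega)]
  · intro j hj1 hj2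
    rw [etilde, esymm_Lambda d hd j hj2, Nat.choose_eq_zero_of_lt (by omega)]
    simp
  · intro i hi1 hi2
    obtain ⟨i', rfl⟩ : ∃ i', i = i' + 1 := ⟨i - 1, by omega⟩
    have hi : i' + 1 ≤ d := hi2
    set ρ : ℝ := ((d : ℝ) - i') / (2 * (d : ℝ) - i') with hρdef
    set b : ℝ := (2 * (d : ℝ) - i') / ((i' : ℝ) + 1) with hbdef
    set y : ℝ := ((2 * d).choose (i' + 1) : ℝ) with hydef
    set y' : ℝ := ((2 * d).choose i' : ℝ) with hy'def
    have hypos : 0 < y := by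
      rw [hydef]; exact_mod_cast Nat.choose_pos (by omega : i' + 1 ≤ 2 * d)
    have hy'pos : 0 < y' := by
      rw [hy'def]; exact_mod_cast Nat.choose_pos (by omega : i' ≤ 2 * d)
    have hdipos : (0 : ℝ) < (d : ℝ) - i' := by
      have : (i' : ℝ) < (d : ℝ) := by exact_mod_cast (by omega : i' < d)
      linarith
    have h2dipos : (0 : ℝ) < 2 * (d : ℝ) - i' := by
      have : (i' : ℝ) ≤ (d : ℝ) := by exact_mod_cast (by omega : i' ≤ d)
      have hd0 : (1 : ℝ) ≤ (d : ℝ) := by exact_mod_cast hd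
      linarith
    have hρpos : 0 < ρ := by rw [hρdef]; positivity
    have hbpos : 0 < b := by rw [hbdef]; positivity
    set K₁ : ℝ := b / y with hK₁def
    set K₂ : ℝ := b * y' with hK₂def
    have hK₁pos : 0 < K₁ := by rw [hK₁def]; positivity
    have hK₂pos : 0 < K₂ := by rw [hK₂def]; positivity
    have hLρ : ((d : ℝ) - (↑(i' + 1) : ℝ) + 1) / (2 * (d : ℝ) - (↑(i' + 1) : ℝ) + 1) = ρ := by
      rw [hρdef]
      push_cast
      ring_nf
    rw [hLρ]
    -- squeeze
    have hlow : Tendsto (fun n : ℕ => ρ * K₁ ^ (1 / (n : ℝ))) atTop (nhds ρ) := by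
      have := (tendsto_const_rpow_one_div K₁ hK₁pos).const_mul ρ
      simpa using this
    have hupp : Tendsto (fun n : ℕ => ρ * K₂ ^ (1 / (n : ℝ))) atTop (nhds ρ) := by
      have := (tendsto_const_rpow_one_div K₂ hK₂pos).const_mul ρ
      simpa using this
    apply tendsto_of_tendsto_of_tendsto_of_le_of_le' hlow hupp
    · filter_upwards [eventually_ge_atTop 1] with n hn
      have hb := (lam_bound d hd lam hlam hmono hnneg i' hi n hn).1
      have hnR : ((n : ℝ)) ≠ 0 := by
        have : (1 : ℝ) ≤ (n : ℝ) := by exact_mod_cast hn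
        linarith
      have h := Real.rpow_le_rpow (by positivity) hb (by positivity : (0:ℝ) ≤ 1 / (n:ℝ))
      have heq : (ρ ^ n * K₁) ^ (1 / (n : ℝ)) = ρ * K₁ ^ (1 / (n : ℝ)) := by
        rw [Real.mul_rpow (by positivity) hK₁pos.le, ← Real.rpow_natCast ρ n,
          ← Real.rpow_mul hρpos.le, mul_one_div_cancel hnR, Real.rpow_one]
      rwa [heq] at h
    · filter_upwards [eventually_ge_atTop 1] with n hn
      have hb := (lam_bound d hd lam hlam hmono hnneg i' hi n hn).2
      have hnR : ((n : ℝ)) ≠ 0 := by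
        have : (1 : ℝ) ≤ (n : ℝ) := by exact_mod_cast hn
        linarith
      have hlamnn : 0 ≤ lam n (i' + 1) := hnneg n hn (i' + 1) (by omega) (by omega)
      have h := Real.rpow_le_rpow hlamnn hb (by positivity : (0:ℝ) ≤ 1 / (n:ℝ))
      have heq : (ρ ^ n * K₂) ^ (1 / (n : ℝ)) = ρ * K₂ ^ (1 / (n : ℝ)) := by
        rw [Real.mul_rpow (by positivity) hK₂pos.le, ← Real.rpow_natCast ρ n,
          ← Real.rpow_mul hρpos.le, mul_one_div_cancel hnR, Real.rpow_one]
      rwa [heq] at h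
  · intro i hi1 hi2 n hn
    exact lam_eq_zero d hd lam hlam hmono hnneg n hn i hi1 hi2
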